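/- Let n ≥ 1, p, q ∈ (0,∞], and let φ be a Schwartz function on ℝⁿ with |φ(x)| ≥ 1 for all x ∈ Q. For ξ₀ ∈ ℝⁿ and 0 < ε < 1, set f_ε(x) = e^{2πi ξ₀·x} φ(εx). Then there exists a constant c ∈ (0,∞), depending only on n, p, q, and φ (in particular independent of ξ₀ and ε), such that c⁻¹ ε^{−n/q} ≤ ‖f_ε‖_{(L^p,ℓ^q)} ≤ c ε^{−n/q} for all 0 < ε < 1. -/

import Mathlib

open MeasureTheory Real Set
open scoped ENNReal NNReal

noncomputable section

namespace LatticeBump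

/-- ℝⁿ as a Euclidean space. -/
abbrev En (n : ℕ) := EuclideanSpace ℝ (Fin n)

/-- ℤⁿ. -/
abbrev Zn (n : ℕ) := Fin n → ℤ

/-- The lattice point `k ∈ ℤⁿ` viewed as a point of ℝⁿ. -/
def intVec {n : ℕ} (k : Zn n) : En n := WithLp.toLp 2 (fun i => (k i : ℝ))

/-- `e^{2πit}`. -/
def e2πi (t : ℝ) : ℂ := Complex.exp (2 * Real.pi * t * Complex.I)

/-- The dot product on ℝⁿ. -/
def dotE {n : ℕ} (x ξ : En n) : ℝ := ∑ i, x i * ξ i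

/-- Fourier transform `f̂(ξ) = ∫ f(x) e^{-2πi x·ξ} dx`. -/
def FT {n : ℕ} (f : En n → ℂ) (ξ : En n) : ℂ := ∫ x, e2πi (-(dotE x ξ)) * f x

/-- Inverse Fourier transform. -/
def invFT {n : ℕ} (f : En n → ℂ) (x : En n) : ℂ := ∫ ξ, e2πi (dotE x ξ) * f ξ

/-- The bilinear Fourier multiplier operator `T_σ`. -/
def Tbil {n : ℕ} (σ : En n × En n → ℂ) (f₁ f₂ : En n → ℂ) (x : En n) : ℂ :=
  ∫ ξ : En n × En n, e2πi (dotE x (ξ.1 + ξ.2)) * σ ξ * FT f₁ ξ.1 * FT f₂ ξ.2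

/-- The lattice bump multiplier `σ_{a,Φ}`. -/
def latticeSymbol {n : ℕ} (a : Zn n × Zn n → ℂ) (Φ : En n × En n → ℂ)
    (ξ : En n × En n) : ℂ :=
  ∑' μ : Zn n × Zn n, a μ * Φ (ξ.1 - intVec μ.1, ξ.2 - intVec μ.2)

/-- ℓ^q norm (`q ∈ (0,∞]`) of an ℝ≥0∞-valued family. -/
def lqNorm {ι : Type*} (q : ℝ≥0∞) (u : ι → ℝ≥0∞) : ℝ≥0∞ :=
  if q = ∞ then ⨆ i, u i else (∑' i, u i ^ q.toReal) ^ (1 / q.toReal)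

/-- L^p norm (`p ∈ (0,∞]`) of an ℝ≥0∞-valued function. -/
def LpNormE {α : Type*} [MeasurableSpace α] (p : ℝ≥0∞) (μ : Measure α)
    (u : α → ℝ≥0∞) : ℝ≥0∞ :=
  if p = ∞ then essSup u μ else (∫⁻ x, u x ^ p.toReal ∂μ) ^ (1 / p.toReal)

/-- The unit cube `Q = (-1/2, 1/2]ⁿ`. -/
def unitCube (n : ℕ) : Set (En n) := {x | ∀ i, x i ∈ Set.Ioc (-(1:ℝ)/2) (1/2)}

/-- The shifted cube `k + Q`. -/
def shiftedCube {n : ℕ} (k : Zn n) : Set (En n) :=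
  {x | ∀ i, x i - (k i : ℝ) ∈ Set.Ioc (-(1:ℝ)/2) (1/2)}

/-- The amalgam space quasi-norm `‖f‖_{(L^p, ℓ^q)}`. -/
def amalgamNorm {n : ℕ} (p q : ℝ≥0∞) (f : En n → ℂ) : ℝ≥0∞ :=
  lqNorm q (fun k : Zn n => eLpNorm f p (volume.restrict (shiftedCube k)))

/-- Operator quasi-norm of `T_σ` between amalgam spaces (∞ if unbounded). -/
def amalgamOpNorm {n : ℕ} (σ : En n × En n → ℂ) (p₁ p₂ p q₁ q₂ q : ℝ≥0∞) : ℝ≥0∞ :=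
  sInf {C : ℝ≥0∞ | ∀ f₁ f₂ : SchwartzMap (En n) ℂ,
    amalgamNorm p q (Tbil σ ⇑f₁ ⇑f₂) ≤ C * amalgamNorm p₁ q₁ ⇑f₁ * amalgamNorm p₂ q₂ ⇑f₂}

/-- A smooth function on the torus 𝕋ⁿ, identified with a smooth 1-periodic function on ℝⁿ. -/
def IsSmoothPeriodic {n : ℕ} (F : En n → ℂ) : Prop :=
  ContDiff ℝ (⊤ : ℕ∞) F ∧ ∀ (x : En n) (k : Zn n), F (x + intVec k) = F x

/-- Fourier coefficient of a periodic function. -/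
def perCoeff {n : ℕ} (F : En n → ℂ) (μ : Zn n) : ℂ :=
  ∫ x in unitCube n, e2πi (-(dotE (intVec μ) x)) * F x

/-- The periodic bilinear Fourier multiplier operator `T^per_a`. -/
def Tper {n : ℕ} (a : Zn n × Zn n → ℂ) (F₁ F₂ : En n → ℂ) (x : En n) : ℂ :=
  ∑' μ : Zn n × Zn n,
    e2πi (dotE x (intVec μ.1 + intVec μ.2)) * a μ * perCoeff F₁ μ.1 * perCoeff F₂ μ.2

/-- `L^p(𝕋ⁿ)` quasi-norm (over the fundamental domain Q). -/
def perLp {n : ℕ} (p : ℝ≥0∞) (F : En n → ℂ) : ℝ≥0∞ :=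
  eLpNorm F p (volume.restrict (unitCube n))

/-- `‖T^per_a‖_{L^{p₁}×L^{p₂}→L^p}`. -/
def perOpNorm {n : ℕ} (a : Zn n × Zn n → ℂ) (p₁ p₂ p : ℝ≥0∞) : ℝ≥0∞ :=
  ⨆ (F₁ : {F : En n → ℂ // IsSmoothPeriodic F ∧ F ≠ 0})
    (F₂ : {F : En n → ℂ // IsSmoothPeriodic F ∧ F ≠ 0}),
      perLp p (Tper a F₁.1 F₂.1) / (perLp p₁ F₁.1 * perLp p₂ F₂.1)

/-- Condition (B). -/
def CondB {n : ℕ} (Φ : En n × En n → ℂ) : Prop :=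
  ∃ ξ0 : En n × En n, Φ ξ0 ≠ 0 ∧
    ∀ μ : Zn n × Zn n, μ ≠ 0 →
      ξ0 ∉ tsupport (fun ξ : En n × En n => Φ (ξ.1 - intVec μ.1, ξ.2 - intVec μ.2))

/-- `a ∈ ℓ^∞`. -/
def BddSeq {ι : Type*} (a : ι → ℂ) : Prop := ∃ M : ℝ, ∀ i, ‖a i‖ ≤ M

/-- The Fourier multiplier operator `m(D)` realized as convolution with `𝓕⁻¹m`. -/
def mulOp {n : ℕ} (m : En n → ℂ) (g : En n → ℂ) (x : En n) : ℂ :=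
  ∫ y, invFT m (x - y) * g y

/-- The Wiener amalgam quasi-norm `‖g‖_{W^{p,q}}` associated with the window `κ`. -/
def wienerNorm {n : ℕ} (κ : En n → ℂ) (p q : ℝ≥0∞) (g : En n → ℂ) : ℝ≥0∞ :=
  LpNormE p volume (fun x =>
    lqNorm q (fun k : Zn n => (‖mulOp (fun ξ => κ (ξ - intVec k)) g x‖₊ : ℝ≥0∞)))

/-- An admissible window for Wiener amalgam spaces:
`κ ∈ C_0^∞` with `|∑_k κ(ξ-k)| ≥ 1`. -/
def AdmissibleWindow {n : ℕ} (κ : En n → ℂ) : Prop :=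
  ContDiff ℝ (⊤ : ℕ∞) κ ∧ HasCompactSupport κ ∧
    ∀ ξ : En n, 1 ≤ ‖∑' k : Zn n, κ (ξ - intVec k)‖

/-- Operator quasi-norm of `T_σ` between Wiener amalgam spaces. -/
def wienerOpNorm {n : ℕ} (κ : En n → ℂ) (σ : En n × En n → ℂ)
    (p₁ p₂ p q₁ q₂ q : ℝ≥0∞) : ℝ≥0∞ :=
  sInf {C : ℝ≥0∞ | ∀ f₁ f₂ : SchwartzMap (En n) ℂ,
    wienerNorm κ p q (Tbil σ ⇑f₁ ⇑f₂)
      ≤ C * wienerNorm κ p₁ q₁ ⇑f₁ * wienerNorm κ p₂ q₂ ⇑f₂}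

/-- The discrete bilinear operator `S_a`. -/
def Sa {n : ℕ} (a : Zn n × Zn n → ℂ) (b₁ b₂ : Zn n → ℂ) (μ : Zn n) : ℂ :=
  ∑' ν : Zn n, a (ν, μ - ν) * b₁ ν * b₂ (μ - ν)

/-- ℓ^q quasi-norm of a complex sequence on ℤⁿ. -/
def seqLq {n : ℕ} (q : ℝ≥0∞) (b : Zn n → ℂ) : ℝ≥0∞ :=
  lqNorm q (fun μ => (‖b μ‖₊ : ℝ≥0∞))

/-- `‖S_a‖_{ℓ^{q₁}×ℓ^{q₂}→ℓ^q}`: supremum over nonzero finitely supported sequences. -/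
def SaOpNorm {n : ℕ} (a : Zn n × Zn n → ℂ) (q₁ q₂ q : ℝ≥0∞) : ℝ≥0∞ :=
  ⨆ (b₁ : {b : Zn n → ℂ // (Function.support b).Finite ∧ b ≠ 0})
    (b₂ : {b : Zn n → ℂ // (Function.support b).Finite ∧ b ≠ 0}),
      seqLq q (Sa a b₁.1 b₂.1) / (seqLq q₁ b₁.1 * seqLq q₂ b₂.1)


set_option maxHeartbeats 1000000

section AuxStatement15

variable {n : ℕ}

lemma norm_e2πi (t : ℝ) : ‖e2πi t‖ = 1 := by
  simp [e2πi, Complex.norm_exp]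

lemma abs_coord_le_norm (x : En n) (i : Fin n) : |x i| ≤ ‖x‖ := by
  rw [EuclideanSpace.norm_eq, ← Real.sqrt_sq_eq_abs]
  apply Real.sqrt_le_sqrt
  calc x i ^ 2 = ‖x i‖ ^ 2 := by rw [Real.norm_eq_abs, sq_abs]
    _ ≤ ∑ j, ‖x j‖ ^ 2 :=
      Finset.single_le_sum (f := fun j => ‖x j‖ ^ 2) (fun j _ => by positivity)
        (Finset.mem_univ i)

lemma shiftedCube_eq_preimage (k : Zn n) :
    shiftedCube k = (MeasurableEquiv.toLp 2 (Fin n → ℝ)).symm ⁻¹'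
      (Set.univ.pi fun i => Ioc ((k i : ℝ) - 1/2) ((k i : ℝ) + 1/2)) := by
  ext x
  simp only [shiftedCube, mem_setOf_eq, mem_preimage, MeasurableEquiv.coe_toLp_symm,
    Set.mem_pi, Set.mem_univ, forall_true_left, mem_Ioc]
  constructor
  · intro h i; exact ⟨by linarith [(h i).1], by linarith [(h i).2]⟩
  · intro h i; exact ⟨by linarith [(h i).1], by linarith [(h i).2]⟩

lemma measurableSet_shiftedCube (k : Zn n) : MeasurableSet (shiftedCube k) := by
  rw [shiftedCube_eq_preimage]
  exact (MeasurableEquiv.toLp 2 (Fin n → ℝ)).symm.measurable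
    (MeasurableSet.univ_pi fun i => measurableSet_Ioc)

lemma volume_shiftedCube (k : Zn n) : volume (shiftedCube k) = 1 := by
  rw [shiftedCube_eq_preimage,
    (EuclideanSpace.volume_preserving_symm_measurableEquiv_toLp (Fin n)).measure_preimage
      ((MeasurableSet.univ_pi fun i => measurableSet_Ioc).nullMeasurableSet),
    volume_pi_pi]
  have h : ∀ i : Fin n, volume (Ioc ((k i : ℝ) - 1/2) ((k i : ℝ) + 1/2)) = 1 := fun i => by
    rw [Real.volume_Ioc]
    norm_num
  simp only [h]
  simp

lemma restrict_cube_univ (k : Zn n) : (volume.restrict (shiftedCube k)) Set.univ = 1 := by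
  rw [Measure.restrict_apply_univ, volume_shiftedCube]

lemma eLpNorm_cube_le {p : ℝ≥0∞} {f : En n → ℂ} {k : Zn n} {M : ℝ}
    (h : ∀ x ∈ shiftedCube k, ‖f x‖ ≤ M) :
    eLpNorm f p (volume.restrict (shiftedCube k)) ≤ ENNReal.ofReal M := by
  have h2 := eLpNorm_le_of_ae_bound (p := p) (μ := volume.restrict (shiftedCube k))
    (ae_restrict_of_forall_mem (measurableSet_shiftedCube k) h)
  rwa [restrict_cube_univ, ENNReal.one_rpow, one_mul] at h2

lemma one_le_eLpNorm_cube {p : ℝ≥0∞} (hp : p ≠ 0) {f : En n → ℂ} {k : Zn n}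
    (h : ∀ x ∈ shiftedCube k, 1 ≤ ‖f x‖) :
    1 ≤ eLpNorm f p (volume.restrict (shiftedCube k)) := by
  have hne : (volume.restrict (shiftedCube k)) ≠ 0 := by
    intro h0
    have h1 := restrict_cube_univ (n := n) k
    rw [h0] at h1
    simp at h1
  have hae : ∀ᵐ x ∂(volume.restrict (shiftedCube k)), ‖(1:ℂ)‖ ≤ ‖f x‖ := by
    refine ae_restrict_of_forall_mem (measurableSet_shiftedCube k) fun x hx => ?_
    simpa using h x hx
  have h1 := eLpNorm_mono_ae (p := p) hae
  rw [eLpNorm_const _ hp hne, restrict_cube_univ, ENNReal.one_rpow] at h1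
  simpa using h1

lemma schwartz_decay_bound (φ : SchwartzMap (En n) ℂ) (N : ℕ) :
    ∃ C : ℝ, 1 ≤ C ∧ ∀ x : En n, ‖φ x‖ * (1 + ‖x‖) ^ N ≤ C := by
  refine ⟨max 1 (2 ^ N * ((Finset.Iic (N, 0)).sup fun m =>
    SchwartzMap.seminorm ℝ m.1 m.2) φ), le_max_left _ _, fun x => ?_⟩
  have h := SchwartzMap.one_add_le_sup_seminorm_apply (𝕜 := ℝ) (m := (N, 0)) le_rfl le_rfl φ x
  rw [norm_iteratedFDeriv_zero] at h
  calc ‖φ x‖ * (1 + ‖x‖) ^ N = (1 + ‖x‖) ^ N * ‖φ x‖ := mul_comm _ _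
    _ ≤ _ := h
    _ ≤ _ := le_max_right _ _

lemma nat_tail_sum {ε : ℝ} (hε : 0 < ε) :
    ∑' a : ℕ, ENNReal.ofReal (((1 + ε * ((a : ℝ) + 1)) ^ 2)⁻¹) ≤ ENNReal.ofReal (1 / ε) := by
  rw [ENNReal.tsum_eq_iSup_sum]
  refine iSup_le fun S => ?_
  obtain ⟨Nn, hS⟩ := Finset.exists_nat_subset_range S
  have ht : ∀ a : ℕ, ((1 + ε * ((a : ℝ) + 1)) ^ 2)⁻¹
      ≤ (1 / ε) * ((1 + ε * (a : ℝ))⁻¹ - (1 + ε * ((a : ℝ) + 1))⁻¹) := by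
    intro a
    have hu : (0:ℝ) < 1 + ε * a := by positivity
    have hv : (0:ℝ) < 1 + ε * ((a : ℝ) + 1) := by positivity
    rw [inv_sub_inv hu.ne' hv.ne']
    have h3 : (1 + ε * ((a : ℝ) + 1)) - (1 + ε * (a : ℝ)) = ε := by ring
    rw [h3]
    have h4 : (1 / ε) * (ε / ((1 + ε * (a : ℝ)) * (1 + ε * ((a : ℝ) + 1))))
        = ((1 + ε * (a : ℝ)) * (1 + ε * ((a : ℝ) + 1)))⁻¹ := by
      field_simp
    rw [h4]
    apply inv_anti₀ (by positivity)
    nlinarith [hε.le]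
  calc ∑ a ∈ S, ENNReal.ofReal (((1 + ε * ((a : ℝ) + 1)) ^ 2)⁻¹)
      ≤ ∑ a ∈ Finset.range Nn, ENNReal.ofReal (((1 + ε * ((a : ℝ) + 1)) ^ 2)⁻¹) :=
        Finset.sum_le_sum_of_subset hS
    _ = ENNReal.ofReal (∑ a ∈ Finset.range Nn, ((1 + ε * ((a : ℝ) + 1)) ^ 2)⁻¹) :=
        (ENNReal.ofReal_sum_of_nonneg fun a _ => by positivity).symm
    _ ≤ ENNReal.ofReal (1 / ε) := by
        apply ENNReal.ofReal_le_ofReal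
        calc ∑ a ∈ Finset.range Nn, ((1 + ε * ((a : ℝ) + 1)) ^ 2)⁻¹
            ≤ ∑ a ∈ Finset.range Nn,
              (1 / ε) * ((1 + ε * (a : ℝ))⁻¹ - (1 + ε * ((a : ℝ) + 1))⁻¹) :=
              Finset.sum_le_sum fun a _ => ht a
          _ = (1 / ε) * ∑ a ∈ Finset.range Nn,
              ((fun b : ℕ => (1 + ε * (b : ℝ))⁻¹) a - (fun b : ℕ => (1 + ε * (b : ℝ))⁻¹) (a + 1)) := by
              rw [← Finset.mul_sum]
              congr 1
              refine Finset.sum_congr rfl fun a _ => ?_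
              push_cast
              ring_nf
          _ = (1 / ε) * ((1 + ε * ((0:ℕ) : ℝ))⁻¹ - (1 + ε * ((Nn:ℕ) : ℝ))⁻¹) := by
              rw [Finset.sum_range_sub' (fun b : ℕ => (1 + ε * (b : ℝ))⁻¹)]
          _ ≤ 1 / ε := by
              have h5 : (0:ℝ) ≤ (1 + ε * ((Nn:ℕ) : ℝ))⁻¹ := by positivity
              have h6 : (0:ℝ) ≤ 1 / ε := by positivity
              simp only [Nat.cast_zero, mul_zero, add_zero, inv_one]
              nlinarith

lemma int_sum_le {ε : ℝ} (hε : 0 < ε) (hε1 : ε ≤ 1) :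
    ∑' m : ℤ, ENNReal.ofReal (((1 + ε * |(m : ℝ)|) ^ 2)⁻¹) ≤ ENNReal.ofReal (3 / ε) := by
  have h1ε : (1:ℝ) ≤ 1 / ε := by
    rw [le_div_iff₀ hε, one_mul]; exact hε1
  rw [tsum_of_nat_of_neg_add_one ENNReal.summable ENNReal.summable]
  have hpos : ∑' a : ℕ, ENNReal.ofReal (((1 + ε * |((a : ℤ) : ℝ)|) ^ 2)⁻¹)
      ≤ ENNReal.ofReal 1 + ENNReal.ofReal (1 / ε) := by
    rw [tsum_eq_zero_add' ENNReal.summable]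
    refine add_le_add (le_of_eq ?_) ?_
    · norm_num
    · refine le_trans (le_of_eq (tsum_congr fun a => ?_)) (nat_tail_sum hε)
      congr 2
      push_cast
      rw [abs_of_nonneg (by positivity)]
  have hneg : ∑' a : ℕ, ENNReal.ofReal (((1 + ε * |((-(((a:ℕ):ℤ)) - 1 : ℤ) : ℝ)|) ^ 2)⁻¹)
      ≤ ENNReal.ofReal (1 / ε) := by
    refine le_trans (le_of_eq (tsum_congr fun a => ?_)) (nat_tail_sum hε)
    congr 2
    push_cast
    rw [abs_of_nonpos (by linarith [Nat.cast_nonneg (α := ℝ) a])]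
    ring
  calc _ ≤ (ENNReal.ofReal 1 + ENNReal.ofReal (1 / ε)) + ENNReal.ofReal (1 / ε) := by
        refine add_le_add hpos ?_
        refine le_trans (le_of_eq (tsum_congr fun a => ?_)) hneg
        congr 2
        push_cast
        ring
    _ = ENNReal.ofReal (1 + 1 / ε + 1 / ε) := by
        rw [← ENNReal.ofReal_add (by norm_num) (by positivity),
          ← ENNReal.ofReal_add (by positivity) (by positivity)]
    _ ≤ ENNReal.ofReal (3 / ε) := by
        apply ENNReal.ofReal_le_ofReal
        have : (3:ℝ) / ε = 3 * (1 / ε) := by ring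
        linarith [this]

lemma tsum_pi_prod (g : ℤ → ℝ≥0∞) :
    ∀ m : ℕ, ∑' k : Fin m → ℤ, ∏ i, g (k i) = (∑' j : ℤ, g j) ^ m := by
  intro m
  induction m with
  | zero => simp [tsum_fintype]
  | succ m ih =>
    calc ∑' k : Fin (m+1) → ℤ, ∏ i, g (k i)
        = ∑' p : ℤ × (Fin m → ℤ), ∏ i, g ((Fin.cons p.1 p.2 : Fin (m+1) → ℤ) i) :=
          ((Fin.consEquiv fun _ : Fin (m+1) => ℤ).tsum_eq (fun k => ∏ i, g (k i))).symm
      _ = ∑' p : ℤ × (Fin m → ℤ), g p.1 * ∏ i, g (p.2 i) := tsum_congr fun p => by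
          simp [Fin.prod_univ_succ]
      _ = (∑' j : ℤ, g j) ^ (m+1) := by
          rw [ENNReal.tsum_prod']
          simp_rw [ENNReal.tsum_mul_left]
          rw [ENNReal.tsum_mul_right, ih, pow_succ, mul_comm]

end AuxStatement15

/-- Amalgam norm of the modulated dilate `f_ε(x) = e^{2πi ξ₀·x} φ(εx)` is
comparable to `ε^{-n/q}` (when `q = ∞`, `ε^{-n/q} = 1`, as `q.toReal = 0`). -/
theorem statement15 (n : ℕ) (hn : 1 ≤ n) (p q : ℝ≥0∞) (hp : 0 < p) (hq : 0 < q)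
    (φ : SchwartzMap (En n) ℂ) (hφ : ∀ x ∈ unitCube n, 1 ≤ ‖φ x‖) :
    ∃ c : ℝ≥0∞, 0 < c ∧ c < ∞ ∧
      ∀ (ξ₀ : En n) (ε : ℝ), 0 < ε → ε < 1 →
        c⁻¹ * ENNReal.ofReal (ε ^ (-((n : ℝ) / q.toReal)))
            ≤ amalgamNorm p q (fun x : En n => e2πi (dotE ξ₀ x) * φ (ε • x)) ∧
        amalgamNorm p q (fun x : En n => e2πi (dotE ξ₀ x) * φ (ε • x))
            ≤ c * ENNReal.ofReal (ε ^ (-((n : ℝ) / q.toReal))) := by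
  have hFn : ∀ (ξ₀ : En n) (ε : ℝ) (x : En n),
      ‖e2πi (dotE ξ₀ x) * φ (ε • x)‖ = ‖φ (ε • x)‖ := fun ξ₀ ε x => by
    rw [norm_mul, norm_e2πi, one_mul]
  rcases eq_or_ne q ⊤ with hqtop | hqtop
  · -- q = ∞
    obtain ⟨C, hC1, hC⟩ := schwartz_decay_bound φ 0
    refine ⟨ENNReal.ofReal C, ENNReal.ofReal_pos.2 (by linarith), ENNReal.ofReal_lt_top,
      fun ξ₀ ε hε hε1 => ?_⟩
    have hexp : (-((n : ℝ) / q.toReal)) = 0 := by rw [hqtop]; simp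
    rw [hexp, Real.rpow_zero, ENNReal.ofReal_one, mul_one, mul_one]
    have hAm : amalgamNorm p q (fun x : En n => e2πi (dotE ξ₀ x) * φ (ε • x))
        = ⨆ k : Zn n, eLpNorm (fun x : En n => e2πi (dotE ξ₀ x) * φ (ε • x)) p
            (volume.restrict (shiftedCube k)) := by
      simp only [amalgamNorm, lqNorm, if_pos hqtop]
    rw [hAm]
    constructor
    · have h0 : (1 : ℝ≥0∞) ≤ eLpNorm (fun x : En n => e2πi (dotE ξ₀ x) * φ (ε • x)) p
          (volume.restrict (shiftedCube (0 : Zn n))) := by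
        apply one_le_eLpNorm_cube hp.ne'
        intro x hx
        rw [hFn]
        apply hφ
        simp only [shiftedCube, Set.mem_setOf_eq, Set.mem_Ioc] at hx
        intro i
        have hxi := hx i
        simp only [Pi.zero_apply, Int.cast_zero, sub_zero] at hxi
        have hsm : (ε • x) i = ε * x i := rfl
        constructor
        · rw [hsm]; nlinarith [hxi.1, hxi.2]
        · rw [hsm]; nlinarith [hxi.1, hxi.2]
      calc (ENNReal.ofReal C)⁻¹ ≤ 1 := ENNReal.inv_le_one.2 (ENNReal.one_le_ofReal.2 hC1)
        _ ≤ _ := h0.trans (le_iSup (fun k : Zn n => eLpNorm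
              (fun x : En n => e2πi (dotE ξ₀ x) * φ (ε • x)) p
              (volume.restrict (shiftedCube k))) (0 : Zn n))
    · refine iSup_le fun k => eLpNorm_cube_le fun x hx => ?_
      rw [hFn]
      have := hC (ε • x)
      simpa using this
  · -- q < ∞
    have hr0 : 0 < q.toReal := ENNReal.toReal_pos hq.ne' hqtop
    set r : ℝ := q.toReal with hrdef
    set s : ℕ := max 1 ⌈2 / r⌉₊ with hsdef
    have hsr : 2 ≤ (s : ℝ) * r := by
      have h1 : (2 / r) ≤ (⌈2 / r⌉₊ : ℝ) := Nat.le_ceil _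
      have h2 : ((⌈2 / r⌉₊ : ℕ) : ℝ) ≤ (s : ℝ) := by
        exact_mod_cast Nat.le_max_right 1 ⌈2 / r⌉₊
      have h3 := mul_le_mul_of_nonneg_right (h1.trans h2) hr0.le
      rwa [div_mul_cancel₀ _ hr0.ne'] at h3
    set N : ℕ := n * s with hNdef
    obtain ⟨C, hC1, hC⟩ := schwartz_decay_bound φ N
    set C2 : ℝ := C * (3 / 2) ^ N with hC2def
    have h32 : (1 : ℝ) ≤ (3 / 2) ^ N := one_le_pow₀ (by norm_num)
    have hC2_1 : 1 ≤ C2 := by nlinarith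
    set A : ℝ := max (C2 * 3 ^ ((n : ℝ) / r)) (4 ^ ((n : ℝ) / r)) with hAdef
    have h3r : (1 : ℝ) ≤ 3 ^ ((n : ℝ) / r) := by
      calc (1 : ℝ) = 3 ^ (0 : ℝ) := (Real.rpow_zero 3).symm
        _ ≤ 3 ^ ((n : ℝ) / r) := Real.rpow_le_rpow_of_exponent_le (by norm_num) (by positivity)
    have h4r : (1 : ℝ) ≤ 4 ^ ((n : ℝ) / r) := by
      calc (1 : ℝ) = 4 ^ (0 : ℝ) := (Real.rpow_zero 4).symm
        _ ≤ 4 ^ ((n : ℝ) / r) := Real.rpow_le_rpow_of_exponent_le (by norm_num) (by positivity)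
    have hA1 : 1 ≤ A := le_trans (by nlinarith) (le_max_left _ _)
    refine ⟨ENNReal.ofReal A, ENNReal.ofReal_pos.2 (by linarith), ENNReal.ofReal_lt_top,
      fun ξ₀ ε hε hε1 => ?_⟩
    set F : En n → ℂ := fun x => e2πi (dotE ξ₀ x) * φ (ε • x) with hFdef
    set u : Zn n → ℝ≥0∞ := fun k => eLpNorm F p (volume.restrict (shiftedCube k)) with hudef
    have hAm : amalgamNorm p q F = (∑' k : Zn n, u k ^ r) ^ (1 / r) := by
      simp only [amalgamNorm, lqNorm, if_neg hqtop, hudef, hrdef]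
    -- pointwise bound on each cube
    have cube_bound : ∀ k : Zn n, ∀ x ∈ shiftedCube k,
        ‖F x‖ ≤ C2 / ∏ i, (1 + ε * |(k i : ℝ)|) ^ s := by
      intro k x hx
      simp only [shiftedCube, Set.mem_setOf_eq, Set.mem_Ioc] at hx
      have hP : (0 : ℝ) < ∏ i, (1 + ε * |(k i : ℝ)|) ^ s :=
        Finset.prod_pos fun i _ => by positivity
      have hcoord : ∀ i, 1 + ε * |(k i : ℝ)| ≤ (3 / 2) * (1 + ‖ε • x‖) := by
        intro i
        have hxi := hx i
        have h1 : |(k i : ℝ)| ≤ |x i| + 1 / 2 := by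
          have h2 := abs_sub_abs_le_abs_sub ((k i : ℝ)) (x i)
          have h3 : |(k i : ℝ) - x i| ≤ 1 / 2 := by
            rw [abs_sub_comm, abs_le]
            exact ⟨by linarith [hxi.1], hxi.2⟩
          linarith
        have h2 : ε * |x i| ≤ ‖ε • x‖ := by
          have h3 := abs_coord_le_norm (ε • x) i
          have h4 : (ε • x) i = ε * x i := rfl
          rw [h4, abs_mul, abs_of_pos hε] at h3
          exact h3
        have h5 : ε * |(k i : ℝ)| ≤ ε * (|x i| + 1 / 2) :=
          mul_le_mul_of_nonneg_left h1 hε.le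
        have h6 : ε * (|x i| + 1 / 2) = ε * |x i| + ε / 2 := by ring
        nlinarith [norm_nonneg (ε • x), hε.le, hε1.le]
      have hprod : ∏ i, (1 + ε * |(k i : ℝ)|) ^ s ≤ (3 / 2) ^ N * (1 + ‖ε • x‖) ^ N := by
        calc ∏ i, (1 + ε * |(k i : ℝ)|) ^ s
            ≤ ∏ _i : Fin n, ((3 / 2) * (1 + ‖ε • x‖)) ^ s :=
              Finset.prod_le_prod (fun i _ => by positivity)
                (fun i _ => pow_le_pow_left₀ (by positivity) (hcoord i) s)
          _ = (3 / 2) ^ N * (1 + ‖ε • x‖) ^ N := by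
              rw [Finset.prod_const, Finset.card_univ, Fintype.card_fin, ← pow_mul,
                mul_pow, Nat.mul_comm s n]
      rw [hFdef]
      simp only []
      rw [hFn ξ₀ ε x, le_div_iff₀ hP]
      have hφx := hC (ε • x)
      calc ‖φ (ε • x)‖ * ∏ i, (1 + ε * |(k i : ℝ)|) ^ s
          ≤ ‖φ (ε • x)‖ * ((3 / 2) ^ N * (1 + ‖ε • x‖) ^ N) :=
            mul_le_mul_of_nonneg_left hprod (norm_nonneg _)
        _ = ‖φ (ε • x)‖ * (1 + ‖ε • x‖) ^ N * (3 / 2) ^ N := by ring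
        _ ≤ C * (3 / 2) ^ N := mul_le_mul_of_nonneg_right hφx (by positivity)
    have u_le : ∀ k : Zn n, u k ≤ ENNReal.ofReal (C2 / ∏ i, (1 + ε * |(k i : ℝ)|) ^ s) :=
      fun k => eLpNorm_cube_le (cube_bound k)
    -- summing the upper bounds
    have term_le : ∀ k : Zn n, u k ^ r
        ≤ ENNReal.ofReal (C2 ^ r) * ∏ i, ENNReal.ofReal (((1 + ε * |(k i : ℝ)|) ^ 2)⁻¹) := by
      intro k
      have hP : (0 : ℝ) < ∏ i, (1 + ε * |(k i : ℝ)|) ^ s :=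
        Finset.prod_pos fun i _ => by positivity
      have h1 : u k ^ r ≤ ENNReal.ofReal ((C2 / ∏ i, (1 + ε * |(k i : ℝ)|) ^ s) ^ r) := by
        rw [← ENNReal.ofReal_rpow_of_pos (by positivity)]
        exact ENNReal.rpow_le_rpow (u_le k) hr0.le
      refine h1.trans ?_
      rw [← ENNReal.ofReal_prod_of_nonneg (fun i _ => by positivity),
        ← ENNReal.ofReal_mul (by positivity)]
      apply ENNReal.ofReal_le_ofReal
      rw [Real.div_rpow (by linarith) hP.le, div_eq_mul_inv]
      have hPr : (∏ i, ((1 + ε * |(k i : ℝ)|) ^ 2) : ℝ)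
          ≤ (∏ i, (1 + ε * |(k i : ℝ)|) ^ s) ^ r := by
        rw [← Real.finset_prod_rpow _ _ (fun i _ => by positivity) r]
        refine Finset.prod_le_prod (fun i _ => by positivity) fun i _ => ?_
        have hb : (1 : ℝ) ≤ 1 + ε * |(k i : ℝ)| := le_add_of_nonneg_right (by positivity)
        calc (1 + ε * |(k i : ℝ)|) ^ 2 = (1 + ε * |(k i : ℝ)|) ^ ((2 : ℕ) : ℝ) :=
              (Real.rpow_natCast _ 2).symm
          _ ≤ (1 + ε * |(k i : ℝ)|) ^ ((s : ℝ) * r) :=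
              Real.rpow_le_rpow_of_exponent_le hb (by push_cast; linarith)
          _ = ((1 + ε * |(k i : ℝ)|) ^ s) ^ r := by
              rw [Real.rpow_mul (by positivity), Real.rpow_natCast]
      calc C2 ^ r * ((∏ i, (1 + ε * |(k i : ℝ)|) ^ s) ^ r)⁻¹
          ≤ C2 ^ r * (∏ i, ((1 + ε * |(k i : ℝ)|) ^ 2) : ℝ)⁻¹ :=
            mul_le_mul_of_nonneg_left
              (inv_anti₀ (Finset.prod_pos fun i _ => by positivity) hPr)
              (Real.rpow_nonneg (by linarith) r)
        _ = C2 ^ r * ∏ i, (((1 + ε * |(k i : ℝ)|) ^ 2)⁻¹ : ℝ) := by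
            rw [← Finset.prod_inv_distrib]
    have hsum : ∑' k : Zn n, u k ^ r
        ≤ ENNReal.ofReal (C2 ^ r) * ENNReal.ofReal (3 / ε) ^ n := by
      calc ∑' k : Zn n, u k ^ r
          ≤ ∑' k : Zn n, ENNReal.ofReal (C2 ^ r)
              * ∏ i, ENNReal.ofReal (((1 + ε * |(k i : ℝ)|) ^ 2)⁻¹) :=
            ENNReal.tsum_le_tsum term_le
        _ = ENNReal.ofReal (C2 ^ r) * ∑' k : Zn n,
              ∏ i, ENNReal.ofReal (((1 + ε * |(k i : ℝ)|) ^ 2)⁻¹) := ENNReal.tsum_mul_left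
        _ = ENNReal.ofReal (C2 ^ r)
              * (∑' j : ℤ, ENNReal.ofReal (((1 + ε * |(j : ℝ)|) ^ 2)⁻¹)) ^ n := by
            rw [tsum_pi_prod (fun j : ℤ => ENNReal.ofReal (((1 + ε * |(j : ℝ)|) ^ 2)⁻¹)) n]
        _ ≤ ENNReal.ofReal (C2 ^ r) * ENNReal.ofReal (3 / ε) ^ n := by
            gcongr
            exact int_sum_le hε hε1.le
    have upper : (∑' k : Zn n, u k ^ r) ^ (1 / r)
        ≤ ENNReal.ofReal A * ENNReal.ofReal (ε ^ (-((n : ℝ) / r))) := by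
      calc (∑' k : Zn n, u k ^ r) ^ (1 / r)
          ≤ (ENNReal.ofReal (C2 ^ r) * ENNReal.ofReal (3 / ε) ^ n) ^ (1 / r) :=
            ENNReal.rpow_le_rpow hsum (by positivity)
        _ = ENNReal.ofReal (C2 ^ r) ^ (1 / r) * (ENNReal.ofReal (3 / ε) ^ n) ^ (1 / r) :=
            ENNReal.mul_rpow_of_nonneg _ _ (by positivity)
        _ = ENNReal.ofReal C2 * ENNReal.ofReal ((3 / ε) ^ ((n : ℝ) / r)) := by
            rw [ENNReal.ofReal_rpow_of_pos (by positivity : (0:ℝ) < C2 ^ r),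
              ← Real.rpow_mul (by linarith : (0:ℝ) ≤ C2), mul_one_div_cancel hr0.ne',
              Real.rpow_one, ← ENNReal.rpow_natCast (ENNReal.ofReal (3 / ε)) n,
              ← ENNReal.rpow_mul, mul_one_div,
              ENNReal.ofReal_rpow_of_pos (by positivity : (0:ℝ) < 3 / ε)]
        _ = ENNReal.ofReal (C2 * 3 ^ ((n : ℝ) / r) * ε ^ (-((n : ℝ) / r))) := by
            rw [← ENNReal.ofReal_mul (by linarith)]
            congr 1
            rw [Real.div_rpow (by norm_num) hε.le, Real.rpow_neg hε.le]
            ring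
        _ ≤ ENNReal.ofReal (A * ε ^ (-((n : ℝ) / r))) :=
            ENNReal.ofReal_le_ofReal
              (mul_le_mul_of_nonneg_right (le_max_left _ _) (by positivity))
        _ = ENNReal.ofReal A * ENNReal.ofReal (ε ^ (-((n : ℝ) / r))) :=
            ENNReal.ofReal_mul (by linarith)
    -- lower bound
    set B : ℕ := ⌊1 / (2 * ε) - 1 / 2⌋₊ with hBdef
    have hBnn : (0 : ℝ) ≤ 1 / (2 * ε) - 1 / 2 := by
      rw [sub_nonneg, le_div_iff₀ (by positivity)]
      linarith
    have hBle : (B : ℝ) ≤ 1 / (2 * ε) - 1 / 2 := Nat.floor_le hBnn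
    have hcount : ((4 * ε)⁻¹ : ℝ) ≤ 2 * (B : ℝ) + 1 := by
      rcases le_or_gt ((4 * ε)⁻¹ : ℝ) 1 with h | h
      · have : (0 : ℝ) ≤ (B : ℝ) := Nat.cast_nonneg B
        linarith
      · have hB2 : 1 / (2 * ε) - 1 / 2 < (B : ℝ) + 1 := Nat.lt_floor_add_one _
        have h4 : 4 * ε < 1 := by
          rcases one_lt_inv_iff₀.1 h with ⟨_, h4'⟩
          exact h4'
        have ht1 : (4 : ℝ) < 1 / ε := by rw [lt_div_iff₀ hε]; linarith
        have he1 : (1 : ℝ) / (2 * ε) = (1 / ε) / 2 := by ring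
        have he2 : ((4 * ε)⁻¹ : ℝ) = (1 / ε) / 4 := by
          rw [inv_eq_one_div]; ring
        rw [he2]
        rw [he1] at hB2
        linarith
    set K : Finset (Zn n) := Fintype.piFinset (fun _ : Fin n => Finset.Icc (-(B : ℤ)) (B : ℤ))
      with hKdef
    have hmem : ∀ k ∈ K, ∀ x ∈ shiftedCube k, 1 ≤ ‖F x‖ := by
      intro k hk x hx
      simp only [shiftedCube, Set.mem_setOf_eq, Set.mem_Ioc] at hx
      rw [hFdef]
      simp only []
      rw [hFn ξ₀ ε x]
      apply hφ
      intro i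
      have hki : |(k i : ℝ)| ≤ 1 / (2 * ε) - 1 / 2 := by
        have h1 := Fintype.mem_piFinset.1 hk i
        rw [Finset.mem_Icc] at h1
        have h2 : |(k i : ℝ)| ≤ (B : ℝ) := by
          rw [abs_le]
          constructor
          · exact_mod_cast h1.1
          · exact_mod_cast h1.2
        linarith
      have hxi := hx i
      have hsm : (ε • x) i = ε * x i := rfl
      constructor
      · rw [hsm]
        have h3 : -(1 / (2 * ε)) ≤ (k i : ℝ) - 1 / 2 := by
          have := neg_abs_le ((k i : ℝ))
          linarith
        have h4 : -(1 / (2 * ε)) < x i := lt_of_le_of_lt h3 (by linarith [hxi.1])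
        have h5 := mul_lt_mul_of_pos_left h4 hε
        have h6 : ε * (-(1 / (2 * ε))) = -(1 / 2) := by field_simp
        rw [h6] at h5
        linarith
      · rw [hsm]
        have h3 : x i ≤ 1 / (2 * ε) := by
          have := le_abs_self ((k i : ℝ))
          linarith [hxi.2]
        have h5 := mul_le_mul_of_nonneg_left h3 hε.le
        have h6 : ε * (1 / (2 * ε)) = 1 / 2 := by field_simp
        rw [h6] at h5
        linarith
    have hcard : (K.card : ℝ≥0∞) = ((2 * B + 1 : ℕ) : ℝ≥0∞) ^ n := by
      rw [hKdef, Fintype.card_piFinset]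
      have h1 : ∀ i : Fin n, (Finset.Icc (-(B : ℤ)) (B : ℤ)).card = 2 * B + 1 := fun i => by
        rw [Int.card_Icc]
        omega
      rw [Finset.prod_congr rfl fun i _ => h1 i, Finset.prod_const, Finset.card_univ,
        Fintype.card_fin]
      push_cast
      ring
    have hlow : ENNReal.ofReal (((4 * ε)⁻¹) ^ n) ≤ ∑' k : Zn n, u k ^ r := by
      calc ENNReal.ofReal (((4 * ε)⁻¹) ^ n) ≤ ((2 * B + 1 : ℕ) : ℝ≥0∞) ^ n := by
            rw [← ENNReal.ofReal_natCast ((2 * B + 1 : ℕ)), ← ENNReal.ofReal_pow (by positivity)]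
            apply ENNReal.ofReal_le_ofReal
            apply pow_le_pow_left₀ (by positivity) _ n
            push_cast
            linarith
        _ = (K.card : ℝ≥0∞) := hcard.symm
        _ = ∑ _k ∈ K, (1 : ℝ≥0∞) := by simp
        _ ≤ ∑ k ∈ K, u k ^ r := Finset.sum_le_sum fun k hk => by
            have h1 : (1 : ℝ≥0∞) ≤ u k := one_le_eLpNorm_cube hp.ne' (hmem k hk)
            calc (1 : ℝ≥0∞) = 1 ^ r := (ENNReal.one_rpow r).symm
              _ ≤ u k ^ r := ENNReal.rpow_le_rpow h1 hr0.le
        _ ≤ ∑' k : Zn n, u k ^ r := ENNReal.sum_le_tsum K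
    have lower : ENNReal.ofReal A⁻¹ * ENNReal.ofReal (ε ^ (-((n : ℝ) / r)))
        ≤ (∑' k : Zn n, u k ^ r) ^ (1 / r) := by
      have h2 : ENNReal.ofReal ((((4 * ε)⁻¹) ^ n) ^ (1 / r)) ≤ (∑' k : Zn n, u k ^ r) ^ (1 / r) := by
        rw [← ENNReal.ofReal_rpow_of_pos (by positivity)]
        exact ENNReal.rpow_le_rpow hlow (by positivity)
      refine le_trans ?_ h2
      rw [← ENNReal.ofReal_mul (by positivity)]
      apply ENNReal.ofReal_le_ofReal
      have hre : ((((4 * ε)⁻¹) ^ n : ℝ)) ^ (1 / r)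
          = (4 : ℝ) ^ (-((n : ℝ) / r)) * ε ^ (-((n : ℝ) / r)) := by
        rw [← Real.rpow_natCast ((4 * ε)⁻¹) n, ← Real.rpow_mul (by positivity), mul_one_div]
        rw [Real.inv_rpow (by positivity), Real.mul_rpow (by norm_num) hε.le, mul_inv,
          ← Real.rpow_neg (by norm_num), ← Real.rpow_neg hε.le]
      rw [hre]
      apply mul_le_mul_of_nonneg_right _ (by positivity)
      rw [Real.rpow_neg (by norm_num)]
      exact inv_anti₀ (by positivity) (le_max_right _ _)
    have hcinv : (ENNReal.ofReal A)⁻¹ = ENNReal.ofReal A⁻¹ :=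
      (ENNReal.ofReal_inv_of_pos (by linarith)).symm
    rw [hAm] at *
    exact ⟨by rw [hcinv]; exact lower, upper⟩


end LatticeBump
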